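/- Let λ > 0 and E be real numbers, and let s be a complex number with s² = (E + i)² − λ² and Im s ≥ 0. Then (1/(2π)) · ∫_0^{2π} (1/2)·log(1 + (E − λ·cos x)²) dx = log(|E + i + s| / 2). -/

import Mathlib

open Real

lemma aux_one_sub_ne {c z : ℂ} (hc : ‖c‖ < 1) (hz : ‖z‖ = 1) :
    (1 : ℂ) - c * z ≠ 0 := by
  intro h
  rw [sub_eq_zero] at h
  have : ‖c * z‖ < 1 := by rw [norm_mul, hz, mul_one]; exact hc
  rw [← h] at this
  simp at this

lemma aux_cont {c : ℂ} (hc : ‖c‖ < 1) :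
    Continuous fun x : ℝ => Real.log (‖1 - c * Complex.exp (x * Complex.I)‖) := by
  have hcont : Continuous fun x : ℝ => ‖1 - c * Complex.exp (x * Complex.I)‖ :=
    continuous_norm.comp (by fun_prop)
  rw [continuous_iff_continuousAt]
  intro x
  refine (Real.continuousAt_log ?_).comp hcont.continuousAt
  exact norm_ne_zero_iff.mpr (aux_one_sub_ne hc (Complex.norm_exp_ofReal_mul_I x))

lemma aux_key {c : ℂ} (hc : ‖c‖ < 1) :
    ∫ x in (0:ℝ)..(2*π), Real.log (‖1 - c * Complex.exp (x * Complex.I)‖) = 0 := by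
  set f : ℂ → ℂ := fun z => Complex.log (1 - c * z) with hf
  have hne : ∀ z : ℂ, ‖z‖ ≤ 1 → (1 - c * z) ∈ Complex.slitPlane := by
    intro z hz
    left
    have h1 : ‖c * z‖ < 1 := by
      rw [norm_mul]
      nlinarith [norm_nonneg z, norm_nonneg c]
    have h2 : (c * z).re ≤ ‖c * z‖ := Complex.re_le_norm _
    simp only [Complex.sub_re, Complex.one_re]
    linarith
  have hd : DifferentiableOn ℂ f (Metric.closedBall 0 1) := by
    intro z hz
    have hz1 : ‖z‖ ≤ 1 := by
      simpa [Complex.dist_eq] using Metric.mem_closedBall.mp hz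
    exact (((differentiableAt_const (1:ℂ)).sub
      ((differentiableAt_id.const_mul c))).clog (hne z hz1)).differentiableWithinAt
  have hC := hd.circleIntegral_sub_inv_smul (w := 0) (by simp)
  have hf0 : f 0 = 0 := by simp [hf]
  rw [hf0, smul_zero, circleIntegral] at hC
  have hint : ∀ x : ℝ, deriv (circleMap 0 1) x •
      ((circleMap 0 1 x - 0)⁻¹ • f (circleMap 0 1 x))
      = Complex.I * f (Complex.exp (x * Complex.I)) := by
    intro x
    have hz : circleMap 0 1 x = Complex.exp (x * Complex.I) := by simp [circleMap]
    have hzne : Complex.exp ((x:ℂ) * Complex.I) ≠ 0 := Complex.exp_ne_zero _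
    rw [deriv_circleMap, hz, smul_eq_mul, smul_eq_mul, sub_zero]
    field_simp
  simp_rw [hint] at hC
  have hcont : Continuous fun x : ℝ => Complex.I * f (Complex.exp (x * Complex.I)) := by
    rw [continuous_iff_continuousAt]
    intro x
    refine continuousAt_const.mul ?_
    refine (continuousAt_clog ?_).comp (by fun_prop)
    exact hne _ (le_of_eq (Complex.norm_exp_ofReal_mul_I x))
  have him := Complex.imCLM.intervalIntegral_comp_comm
    (f := fun x : ℝ => Complex.I * f (Complex.exp (x * Complex.I)))
    (a := 0) (b := 2*π) (μ := MeasureTheory.volume) (hcont.intervalIntegrable 0 (2*π))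
  rw [hC] at him
  simp only [Complex.imCLM_apply, Complex.zero_im] at him
  have heq : (∫ x in (0:ℝ)..(2*π), Real.log (‖1 - c * Complex.exp (x * Complex.I)‖))
      = ∫ x in (0:ℝ)..(2*π), (Complex.I * f (Complex.exp (x * Complex.I))).im := by
    apply intervalIntegral.integral_congr
    intro x _
    simp [hf, Complex.mul_im, Complex.log_re]
  rw [heq, him]

set_option maxHeartbeats 1000000 in
theorem averaged_log_column_norm (lam E : ℝ) (hlam : 0 < lam) (s : ℂ)
    (hs : s ^ 2 = ((E : ℂ) + Complex.I) ^ 2 - (lam : ℂ) ^ 2) (hims : 0 ≤ s.im) :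
    (1 / (2 * π)) *
        (∫ x in (0:ℝ)..(2 * π), (1 / 2) * Real.log (1 + (E - lam * Real.cos x) ^ 2))
      = Real.log (‖(E : ℂ) + Complex.I + s‖ / 2) := by
  have hlamc : (lam : ℂ) ≠ 0 := by exact_mod_cast hlam.ne'
  -- real equations from hs
  have him := congrArg Complex.im hs
  have hre := congrArg Complex.re hs
  simp only [pow_two, Complex.mul_im, Complex.mul_re, Complex.sub_im, Complex.sub_re,
    Complex.add_im, Complex.add_re, Complex.ofReal_im, Complex.ofReal_re,
    Complex.I_re, Complex.I_im] at him hre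
  set w : ℂ := (E : ℂ) + Complex.I with hw
  -- him : s.re*s.im + s.im*s.re = ... ; hre similar
  have h2 : s.re * s.im = E := by nlinarith [him]
  have h1 : s.re^2 - s.im^2 = E^2 - 1 - lam^2 := by nlinarith [hre]
  have hsim : 0 < s.im := by
    rcases lt_or_eq_of_le hims with h | h
    · exact h
    · exfalso
      have h0 : s.im = 0 := h.symm
      have hE : E = 0 := by rw [← h2, h0]; ring
      rw [h0, hE] at h1
      nlinarith [sq_nonneg s.re, sq_nonneg lam]
  set A : ℂ := w + s with hA
  set B : ℂ := w - s with hB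
  have hAB : A * B = (lam:ℂ)^2 := by rw [hA, hB]; linear_combination -hs
  have habsAB : ‖A‖ * ‖B‖ = lam^2 := by
    rw [← norm_mul, hAB, norm_pow, Complex.norm_real, Real.norm_eq_abs, abs_of_pos hlam]
  have hA2B2 : ‖B‖ ^ 2 < ‖A‖ ^ 2 := by
    rw [Complex.sq_norm, Complex.sq_norm]
    simp only [Complex.normSq_apply, hA, hB, hw, Complex.add_re, Complex.add_im,
      Complex.sub_re, Complex.sub_im, Complex.ofReal_re, Complex.ofReal_im,
      Complex.I_re, Complex.I_im]
    nlinarith [hsim, sq_nonneg s.re]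
  have hBpos : 0 < ‖B‖ := by
    rcases (norm_nonneg B).lt_or_eq with h | h
    · exact h
    · exfalso; rw [← h, mul_zero] at habsAB; nlinarith [mul_pos hlam hlam]
  have hApos : 0 < ‖A‖ := by
    nlinarith [mul_pos hlam hlam, norm_nonneg A, hBpos, habsAB]
  have hBltA : ‖B‖ < ‖A‖ := by
    nlinarith [norm_nonneg A, norm_nonneg B, hA2B2]
  have hBlt : ‖B‖ < lam := by
    nlinarith [mul_lt_mul_of_pos_left hBltA hBpos, habsAB, hBpos, hlam]
  have hAgt : lam < ‖A‖ := by
    nlinarith [mul_pos hApos (sub_pos.mpr hBlt), habsAB, hlam]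
  have hAne : A ≠ 0 := by
    intro h; rw [h] at hApos; simp at hApos
  set c1 : ℂ := (lam:ℂ) / A with hc1def
  set c2 : ℂ := starRingEnd ℂ (B / (lam:ℂ)) with hc2def
  have hc1 : ‖c1‖ < 1 := by
    rw [hc1def, norm_div, Complex.norm_real, Real.norm_eq_abs, abs_of_pos hlam, div_lt_one hApos]
    exact hAgt
  have hc2 : ‖c2‖ < 1 := by
    rw [hc2def, Complex.norm_conj, norm_div, Complex.norm_real, Real.norm_eq_abs, abs_of_pos hlam,
      div_lt_one hlam]
    exact hBlt
  -- pointwise identity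
  have hpt : ∀ x : ℝ, (1/2 : ℝ) * Real.log (1 + (E - lam * Real.cos x)^2)
      = Real.log (‖A‖ / 2)
        + Real.log (‖1 - c1 * Complex.exp (x * Complex.I)‖)
        + Real.log (‖1 - c2 * Complex.exp (x * Complex.I)‖) := by
    intro x
    set z : ℂ := Complex.exp (x * Complex.I) with hz
    have hzabs : ‖z‖ = 1 := Complex.norm_exp_ofReal_mul_I x
    set u : ℂ := Complex.exp (-(x:ℂ) * Complex.I) with hu
    have hzu : z * u = 1 := by
      rw [hz, hu, ← Complex.exp_add]; ring_nf; exact Complex.exp_zero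
    have hcos : ((Real.cos x : ℝ) : ℂ) = (z + u) / 2 := by
      rw [Complex.ofReal_cos, Complex.cos, hz, hu]
    have hK : (w - (lam:ℂ) * ((Real.cos x : ℝ) : ℂ)) * (2 * lam * z)
        = -(((lam:ℂ) * z - A) * ((lam:ℂ) * z - B)) := by
      rw [hcos, hA, hB, hw]
      linear_combination -hs - (lam:ℂ)^2 * hzu
    have e1 : -((lam:ℂ) * z - A) = A * (1 - c1 * z) := by
      rw [hc1def]; field_simp; ring
    have e2 : (lam:ℂ) * z - B = (lam:ℂ) * z * (1 - (B / lam) * u) := by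
      field_simp; linear_combination ((E:ℂ) + Complex.I - s) * hzu
    have hconjz : starRingEnd ℂ z = u := by
      rw [hz, hu, ← Complex.exp_conj]
      congr 1
      simp [Complex.ext_iff]
    have e3 : (1:ℂ) - (B / lam) * u = starRingEnd ℂ (1 - c2 * z) := by
      rw [hc2def, map_sub, map_one, map_mul, Complex.conj_conj, hconjz]
    have e3' : ‖(1:ℂ) - B / lam * u‖ = ‖1 - c2 * z‖ := by
      rw [e3, Complex.norm_conj]
    have hK2 : (w - (lam:ℂ) * ((Real.cos x : ℝ) : ℂ)) * (2 * lam * z)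
        = A * (1 - c1 * z) * ((lam:ℂ) * z * (1 - B / lam * u)) := by
      rw [hK, ← neg_mul, e1, e2]
    have habsK := congrArg (‖·‖) hK2
    simp only [norm_mul, hzabs, Complex.norm_real, Real.norm_eq_abs, Complex.norm_two, abs_of_pos hlam,
      mul_one, e3'] at habsK
    have habs2 : ‖w - (lam:ℂ) * ((Real.cos x : ℝ) : ℂ)‖
        = (‖A‖ / 2) * ‖1 - c1 * z‖ * ‖1 - c2 * z‖ := by
      have hne2l : (2 * lam : ℝ) ≠ 0 := by positivity
      apply mul_right_cancel₀ hne2l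
      linear_combination habsK
    have hsq : 1 + (E - lam * Real.cos x)^2
        = ‖w - (lam:ℂ) * ((Real.cos x : ℝ) : ℂ)‖^2 := by
      rw [Complex.sq_norm]
      simp only [Complex.normSq_apply, hw, Complex.sub_re, Complex.sub_im, Complex.add_re,
        Complex.add_im, Complex.mul_re, Complex.mul_im, Complex.ofReal_re, Complex.ofReal_im,
        Complex.I_re, Complex.I_im]
      ring
    have hne1 : ‖1 - c1 * z‖ ≠ 0 := by
      exact norm_ne_zero_iff.mpr (aux_one_sub_ne hc1 hzabs)
    have hne2 : ‖1 - c2 * z‖ ≠ 0 := by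
      exact norm_ne_zero_iff.mpr (aux_one_sub_ne hc2 hzabs)
    rw [hsq, Real.log_pow, habs2, Real.log_mul (by positivity) hne2,
      Real.log_mul (by positivity) hne1]
    push_cast
    ring
  rw [intervalIntegral.integral_congr (g := fun x : ℝ => Real.log (‖A‖ / 2)
      + Real.log (‖1 - c1 * Complex.exp (x * Complex.I)‖)
      + Real.log (‖1 - c2 * Complex.exp (x * Complex.I)‖)) (fun x _ => hpt x)]
  rw [intervalIntegral.integral_add
      (intervalIntegrable_const.add ((aux_cont hc1).intervalIntegrable 0 (2*π)))
      ((aux_cont hc2).intervalIntegrable 0 (2*π)),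
    intervalIntegral.integral_add intervalIntegrable_const
      ((aux_cont hc1).intervalIntegrable 0 (2*π)),
    aux_key hc1, aux_key hc2, intervalIntegral.integral_const]
  have hpi : π ≠ 0 := Real.pi_ne_zero
  rw [hA, hw]
  field_simp
  rw [sub_zero, smul_eq_mul, add_zero, add_zero]
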